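/- Let n ≥ 2 and f a symmetric Boolean function on n variables. If there exists a nonzero Boolean function g on n variables with fg = 0, then there exist an integer b with 0 ≤ b ≤ ⌊n/2⌋ and a nonzero symmetric Boolean function h in the variables x_{2b+1},…,x_n with deg(h) ≤ deg(g) − b, such that f·h·P_b = 0, where P_b = (x₁+x₂)(x₃+x₄)⋯(x_{2b−1}+x_{2b}). -/

import Mathlib

open scoped Classical

/-- Hamming weight of a Boolean vector. -/
def wtv {n : ℕ} (x : Fin n → ZMod 2) : ℕ := (Finset.univ.filter (fun i => x i = 1)).card

/-- A Boolean function is symmetric if invariant under permutations of inputs. -/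
def SymmF {n : ℕ} (f : (Fin n → ZMod 2) → ZMod 2) : Prop :=
  ∀ σ : Equiv.Perm (Fin n), ∀ x, f (x ∘ σ) = f x

/-- The algebraic degree of a Boolean function: the least `d` such that `f` is
represented by a polynomial of total degree at most `d`. -/
noncomputable def funcDeg {n : ℕ} (f : (Fin n → ZMod 2) → ZMod 2) : ℕ :=
  sInf {d | ∃ P : MvPolynomial (Fin n) (ZMod 2), P.totalDegree ≤ d ∧
    ∀ x, MvPolynomial.eval x P = f x}

/-- Algebraic immunity: the minimal degree of a nonzero annihilator of `f` or `f+1`. -/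
noncomputable def AI {n : ℕ} (f : (Fin n → ZMod 2) → ZMod 2) : ℕ :=
  sInf {d | ∃ g : (Fin n → ZMod 2) → ZMod 2, g ≠ 0 ∧ funcDeg g = d ∧
    (f * g = 0 ∨ (f + 1) * g = 0)}

namespace Stmt7Aux

variable {n : ℕ}

def χ (S : Finset (Fin n)) : Fin n → ZMod 2 := fun i => if i ∈ S then 1 else 0

lemma zmod2_cases (a : ZMod 2) : a = 0 ∨ a = 1 := by fin_cases a <;> [exact Or.inl rfl; exact Or.inr rfl]

lemma zmod2_add_self (a : ZMod 2) : a + a = 0 := by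
  rcases zmod2_cases a with h | h <;> simp [h] <;> decide

lemma exists_chi (x : Fin n → ZMod 2) : ∃ U : Finset (Fin n), x = χ U := by
  refine ⟨Finset.univ.filter (fun i => x i = 1), funext fun i => ?_⟩
  rcases zmod2_cases (x i) with h | h <;> simp [χ, h]

noncomputable def anf (g : (Fin n → ZMod 2) → ZMod 2) (S : Finset (Fin n)) : ZMod 2 :=
  ∑ T ∈ S.powerset, g (χ T)

lemma count_lemma (A S : Finset (Fin n)) :
    (∑ T ∈ S.powerset, if A ⊆ T then (1 : ZMod 2) else 0) = if A = S then 1 else 0 := by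
  rw [Finset.sum_boole]
  by_cases hAS : A ⊆ S
  · have hcard : (S.powerset.filter (fun T => A ⊆ T)).card = 2 ^ (S \ A).card := by
      rw [← Finset.card_powerset]
      refine (Finset.card_bij (fun B _ => A ∪ B) ?_ ?_ ?_).symm
      · intro B hB
        simp only [Finset.mem_powerset] at hB
        simp only [Finset.mem_filter, Finset.mem_powerset]
        exact ⟨Finset.union_subset hAS (hB.trans (Finset.sdiff_subset)), Finset.subset_union_left⟩
      · intro B₁ h₁ B₂ h₂ he
        simp only [Finset.mem_powerset] at h₁ h₂
        ext k
        constructor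
        · intro hk
          have hk2 : k ∈ A ∪ B₂ := by rw [← he]; exact Finset.mem_union_right _ hk
          rcases Finset.mem_union.1 hk2 with h | h
          · exact absurd (h₁ hk) (by simp [Finset.mem_sdiff, h])
          · exact h
        · intro hk
          have hk2 : k ∈ A ∪ B₁ := by rw [he]; exact Finset.mem_union_right _ hk
          rcases Finset.mem_union.1 hk2 with h | h
          · exact absurd (h₂ hk) (by simp [Finset.mem_sdiff, h])
          · exact h
      · intro T hT
        simp only [Finset.mem_filter, Finset.mem_powerset] at hT
        refine ⟨T \ A, by simp only [Finset.mem_powerset]; exact Finset.sdiff_subset_sdiff hT.1 le_rfl, ?_⟩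
        rw [Finset.union_sdiff_of_subset hT.2]
    rw [hcard]
    by_cases hA : A = S
    · simp [hA]
    · have h1 : (S \ A).card ≠ 0 := by
        intro h0
        exact hA (Finset.Subset.antisymm hAS (by
          intro k hk
          by_contra hkA
          have hm : k ∈ S \ A := Finset.mem_sdiff.2 ⟨hk, hkA⟩
          rw [Finset.card_eq_zero.1 h0] at hm
          simp at hm))
      obtain ⟨m, hm⟩ := Nat.exists_eq_succ_of_ne_zero h1
      have h2 : ((2 : ℕ) : ZMod 2) = 0 := by decide
      rw [hm, Nat.cast_pow, pow_succ, h2, mul_zero]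
      simp [hA]
  · have hemp : S.powerset.filter (fun T => A ⊆ T) = ∅ := by
      ext T
      simp only [Finset.mem_filter, Finset.mem_powerset, Finset.notMem_empty, iff_false]
      rintro ⟨h1, h2⟩
      exact hAS (h2.trans h1)
    have hA : A ≠ S := fun h => hAS (h ▸ le_rfl)
    simp [hemp, hA]

lemma inv_lemma (F : Finset (Fin n) → ZMod 2) (U : Finset (Fin n)) :
    ∑ S ∈ U.powerset, ∑ T ∈ S.powerset, F T = F U := by
  have step1 : ∀ S ∈ U.powerset, ∑ T ∈ S.powerset, F T
      = ∑ T ∈ U.powerset, if T ⊆ S then F T else 0 := by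
    intro S hS
    rw [Finset.mem_powerset] at hS
    rw [← Finset.sum_filter]
    congr 1
    ext T
    simp only [Finset.mem_powerset, Finset.mem_filter]
    exact ⟨fun h => ⟨h.trans hS, h⟩, fun h => h.2⟩
  rw [Finset.sum_congr rfl step1, Finset.sum_comm]
  have step2 : ∀ T ∈ U.powerset, (∑ S ∈ U.powerset, if T ⊆ S then F T else 0)
      = if T = U then F T else 0 := by
    intro T _
    have h1 : ∀ S, (if T ⊆ S then F T else 0) = F T * (if T ⊆ S then 1 else 0) := by
      intro S; by_cases h : T ⊆ S <;> simp [h]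
    simp_rw [h1, ← Finset.mul_sum, count_lemma]
    by_cases h : T = U <;> simp [h]
  rw [Finset.sum_congr rfl step2, Finset.sum_eq_single U (fun b _ hb => by simp [hb]) (by simp)]
  simp


noncomputable def anfPoly (g : (Fin n → ZMod 2) → ZMod 2) : MvPolynomial (Fin n) (ZMod 2) :=
  ∑ S : Finset (Fin n), MvPolynomial.C (anf g S) * ∏ i ∈ S, MvPolynomial.X i

lemma prod_chi (U S : Finset (Fin n)) :
    (∏ i ∈ S, χ U i) = if S ⊆ U then (1 : ZMod 2) else 0 := by
  by_cases h : S ⊆ U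
  · rw [if_pos h]
    exact Finset.prod_eq_one (fun i hi => by simp [χ, h hi])
  · rw [if_neg h]
    obtain ⟨i, hiS, hiU⟩ := Finset.not_subset.1 h
    exact Finset.prod_eq_zero hiS (by simp [χ, hiU])

lemma eval_anfPoly (g : (Fin n → ZMod 2) → ZMod 2) (x : Fin n → ZMod 2) :
    MvPolynomial.eval x (anfPoly g) = g x := by
  obtain ⟨U, rfl⟩ := exists_chi x
  rw [anfPoly, map_sum]
  have h1 : ∀ S : Finset (Fin n),
      MvPolynomial.eval (χ U) (MvPolynomial.C (anf g S) * ∏ i ∈ S, MvPolynomial.X i)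
      = if S ⊆ U then anf g S else 0 := by
    intro S
    rw [map_mul, MvPolynomial.eval_C, map_prod]
    simp only [MvPolynomial.eval_X]
    rw [prod_chi]
    by_cases h : S ⊆ U <;> simp [h]
  rw [Finset.sum_congr rfl (fun S _ => h1 S)]
  rw [← Finset.sum_filter]
  have h2 : Finset.univ.filter (fun S : Finset (Fin n) => S ⊆ U) = U.powerset := by
    ext S; simp [Finset.mem_powerset]
  rw [h2]
  exact inv_lemma (fun T => g (χ T)) U

lemma anfPoly_totalDegree_le {g : (Fin n → ZMod 2) → ZMod 2} {d : ℕ}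
    (H : ∀ S : Finset (Fin n), d < S.card → anf g S = 0) :
    (anfPoly g).totalDegree ≤ d := by
  refine (MvPolynomial.totalDegree_finset_sum _ _).trans (Finset.sup_le fun S _ => ?_)
  by_cases h : d < S.card
  · simp [H S h]
  · refine (MvPolynomial.totalDegree_mul _ _).trans ?_
    rw [MvPolynomial.totalDegree_C]
    refine (le_of_eq (zero_add _)).trans ?_
    refine (MvPolynomial.totalDegree_finset_prod _ _).trans ?_
    calc ∑ i ∈ S, (MvPolynomial.X i : MvPolynomial (Fin n) (ZMod 2)).totalDegree
        = S.card := by simp [MvPolynomial.totalDegree_X]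
      _ ≤ d := not_lt.1 h

lemma funcDeg_le {g : (Fin n → ZMod 2) → ZMod 2} {d : ℕ}
    (H : ∀ S : Finset (Fin n), d < S.card → anf g S = 0) : funcDeg g ≤ d :=
  Nat.sInf_le ⟨anfPoly g, anfPoly_totalDegree_le H, eval_anfPoly g⟩

lemma funcDeg_spec (g : (Fin n → ZMod 2) → ZMod 2) :
    ∃ P : MvPolynomial (Fin n) (ZMod 2), P.totalDegree ≤ funcDeg g ∧
      ∀ x, MvPolynomial.eval x P = g x := by
  have hne : {d | ∃ P : MvPolynomial (Fin n) (ZMod 2), P.totalDegree ≤ d ∧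
      ∀ x, MvPolynomial.eval x P = g x}.Nonempty :=
    ⟨(anfPoly g).totalDegree, anfPoly g, le_rfl, eval_anfPoly g⟩
  exact Nat.sInf_mem hne

lemma anf_eq_zero_of_funcDeg_lt {g : (Fin n → ZMod 2) → ZMod 2} {S : Finset (Fin n)}
    (hS : funcDeg g < S.card) : anf g S = 0 := by
  obtain ⟨P, hPd, hPe⟩ := funcDeg_spec g
  have key : ∀ T : Finset (Fin n), g (χ T)
      = ∑ m ∈ P.support, P.coeff m * (if m.support ⊆ T then 1 else 0) := by
    intro T
    rw [← hPe (χ T), MvPolynomial.eval_eq']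
    refine Finset.sum_congr rfl fun m _ => ?_
    congr 1
    by_cases h : m.support ⊆ T
    · rw [if_pos h]
      refine Finset.prod_eq_one fun i _ => ?_
      by_cases hi : i ∈ m.support
      · simp [χ, h hi]
      · simp only [Finsupp.notMem_support_iff] at hi
        simp [hi]
    · rw [if_neg h]
      obtain ⟨i, him, hiT⟩ := Finset.not_subset.1 h
      refine Finset.prod_eq_zero (Finset.mem_univ i) ?_
      have : χ T i = 0 := by simp [χ, hiT]
      rw [this]
      exact zero_pow (Finsupp.mem_support_iff.1 him)
  unfold anf
  rw [Finset.sum_congr rfl (fun T _ => key T), Finset.sum_comm]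
  refine Finset.sum_eq_zero fun m hm => ?_
  rw [← Finset.mul_sum, count_lemma]
  by_cases h : m.support = S
  · exfalso
    have h1 : S.card ≤ m.sum fun _ e => e := by
      rw [← h]
      calc m.support.card = ∑ i ∈ m.support, 1 := by simp
        _ ≤ ∑ i ∈ m.support, m i :=
            Finset.sum_le_sum fun i hi => Nat.one_le_iff_ne_zero.2 (Finsupp.mem_support_iff.1 hi)
        _ = m.sum fun _ e => e := rfl
    exact absurd ((h1.trans (MvPolynomial.le_totalDegree hm)).trans hPd) (not_le.2 hS)
  · simp [h]

lemma funcDeg_comp_perm_le (g : (Fin n → ZMod 2) → ZMod 2) (σ : Equiv.Perm (Fin n)) :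
    funcDeg (fun x => g (x ∘ σ)) ≤ funcDeg g := by
  obtain ⟨P, hPd, hPe⟩ := funcDeg_spec g
  refine Nat.sInf_le ⟨MvPolynomial.rename σ P, ?_, ?_⟩
  · exact (MvPolynomial.totalDegree_rename_le _ _).trans hPd
  · intro x
    rw [MvPolynomial.eval_rename]
    exact hPe (x ∘ σ)

lemma funcDeg_const (g : (Fin n → ZMod 2) → ZMod 2) (hd : funcDeg g ≤ 0) :
    ∀ x y, g x = g y := by
  have key : ∀ U : Finset (Fin n), g (χ U) = g (χ ∅) := by
    intro U
    have h1 : ∑ S ∈ U.powerset, anf g S = g (χ U) := inv_lemma (fun T => g (χ T)) U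
    rw [← h1, Finset.sum_eq_single ∅ (fun S _ hS => anf_eq_zero_of_funcDeg_lt
      (lt_of_le_of_lt hd (Nat.pos_of_ne_zero (fun h0 => hS (Finset.card_eq_zero.1 h0)))))
      (fun h => absurd (Finset.empty_mem_powerset U) h)]
    simp [anf]
  intro x y
  obtain ⟨U, rfl⟩ := exists_chi x
  obtain ⟨V, rfl⟩ := exists_chi y
  rw [key U, key V]


/-- If `g` depends only on coordinates in `A` and `S` contains a coordinate outside `A`,
then the ANF coefficient of `g` at `S` vanishes. -/
lemma anf_eq_zero_of_indep {g : (Fin n → ZMod 2) → ZMod 2} {A : Set (Fin n)}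
    (hg : ∀ x y, (∀ i ∈ A, x i = y i) → g x = g y)
    {S : Finset (Fin n)} {j : Fin n} (hjS : j ∈ S) (hjA : j ∉ A) : anf g S = 0 := by
  unfold anf
  refine Finset.sum_involution
    (fun T _ => if j ∈ T then T.erase j else insert j T) ?_ ?_ ?_ ?_
  · intro T _
    have : g (χ T) = g (χ (if j ∈ T then T.erase j else insert j T)) := by
      apply hg
      intro i hiA
      have hij : i ≠ j := fun h => hjA (h ▸ hiA)
      by_cases h : j ∈ T <;> simp [χ, h, hij, Finset.mem_erase, Finset.mem_insert]
    rw [← this]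
    exact zmod2_add_self _
  · intro T _ _
    by_cases h : j ∈ T
    · simp only [h, if_true]
      intro he
      exact absurd ((he ▸ (Finset.notMem_erase j T)) : j ∉ T) (not_not.2 h)
    · simp only [h, if_false]
      intro he
      exact h (he ▸ Finset.mem_insert_self j T)
  · intro T hT
    rw [Finset.mem_powerset] at hT ⊢
    by_cases h : j ∈ T
    · simp only [h, if_true]
      exact (Finset.erase_subset _ _).trans hT
    · simp only [h, if_false]
      exact Finset.insert_subset hjS hT
  · intro T _
    by_cases h : j ∈ T
    · simp [h, Finset.insert_erase h]
    · simp [h, Finset.erase_insert h]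

/-- Decomposition of a function vanishing on `x i = x j` and invariant under `swap i j`. -/
lemma decomp {g' : (Fin n → ZMod 2) → ZMod 2} {i j : Fin n} (hij : i ≠ j)
    (hvan : ∀ x, x i = x j → g' x = 0)
    (hsym : ∀ x, g' (x ∘ Equiv.swap i j) = g' x) :
    ∃ g1 : (Fin n → ZMod 2) → ZMod 2,
      (∀ x, g' x = (x i + x j) * g1 x) ∧
      (∀ x y, (∀ k, k ≠ i → k ≠ j → x k = y k) → g1 x = g1 y) ∧
      funcDeg g1 ≤ funcDeg g' - 1 := by
  set g1 : (Fin n → ZMod 2) → ZMod 2 :=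
    fun x => g' (Function.update (Function.update x i 0) j 1) with hg1
  have hupd : ∀ x : Fin n → ZMod 2, ∀ k,
      Function.update (Function.update x i 0) j 1 k
      = if k = j then 1 else if k = i then 0 else x k := by
    intro x k
    by_cases h1 : k = j
    · simp [h1, Function.update]
    · by_cases h2 : k = i <;> simp [h1, h2, Function.update]
  have hindep : ∀ x y, (∀ k, k ≠ i → k ≠ j → x k = y k) → g1 x = g1 y := by
    intro x y hxy
    have : Function.update (Function.update x i 0) j 1
        = Function.update (Function.update y i 0) j 1 := by
      funext k
      rw [hupd, hupd]
      by_cases h1 : k = j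
      · simp [h1]
      · by_cases h2 : k = i
        · simp [h1, h2]
        · simp [h1, h2, hxy k h2 h1]
    rw [hg1]
    simp only
    rw [this]
  refine ⟨g1, ?_, hindep, ?_⟩
  · intro x
    rcases zmod2_cases (x i) with hxi | hxi <;> rcases zmod2_cases (x j) with hxj | hxj
    · rw [hvan x (by rw [hxi, hxj]), hxi, hxj]; ring
    · have : Function.update (Function.update x i 0) j 1 = x := by
        funext k
        rw [hupd]
        by_cases h1 : k = j
        · simp [h1, hxj]
        · by_cases h2 : k = i <;> simp [h1, h2, hxi, hij]
      rw [hg1]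
      simp only
      rw [this, hxi, hxj, zero_add, one_mul]
    · have : Function.update (Function.update x i 0) j 1 = x ∘ Equiv.swap i j := by
        funext k
        rw [hupd]
        by_cases h1 : k = j
        · simp [h1, Equiv.swap_apply_right, hxi]
        · by_cases h2 : k = i
          · simp [h2, Equiv.swap_apply_left, hxj, hij]
          · simp [h1, h2, Equiv.swap_apply_of_ne_of_ne h2 h1]
      rw [hg1]
      simp only
      rw [this, hsym, hxi, hxj, add_zero, one_mul]
    · rw [hvan x (by rw [hxi, hxj]), hxi, hxj]
      have : (1 : ZMod 2) + 1 = 0 := by decide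
      rw [this, zero_mul]
  · -- degree bound
    refine funcDeg_le fun S hS => ?_
    by_cases hiS : i ∈ S
    · exact anf_eq_zero_of_indep
        (A := {k | k ≠ i ∧ k ≠ j})
        (fun x y hxy => hindep x y (fun k h1 h2 => hxy k ⟨h1, h2⟩)) hiS (by simp)
    · by_cases hjS : j ∈ S
      · exact anf_eq_zero_of_indep
          (A := {k | k ≠ i ∧ k ≠ j})
          (fun x y hxy => hindep x y (fun k h1 h2 => hxy k ⟨h1, h2⟩)) hjS (by simp)
      · -- i ∉ S, j ∉ S
        have hstep : ∀ T ∈ S.powerset, g1 (χ T) = g' (χ (insert j T)) := by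
          intro T hT
          rw [Finset.mem_powerset] at hT
          have hiT : i ∉ T := fun h => hiS (hT h)
          have hjT : j ∉ T := fun h => hjS (hT h)
          rw [hg1]
          simp only
          congr 1
          funext k
          rw [hupd]
          by_cases h1 : k = j
          · simp [h1, χ]
          · by_cases h2 : k = i
            · have hkins : k ∉ insert j T := by
                rw [h2]
                intro h
                rcases Finset.mem_insert.1 h with h | h
                · exact hij h
                · exact hiT h
              simp [h1, h2, χ, hkins, hij, hiT]
            · simp [h1, h2, χ, Finset.mem_insert, h1]
        have h1 : anf g1 S = ∑ T ∈ S.powerset, g' (χ (insert j T)) :=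
          Finset.sum_congr rfl hstep
        have h2 : anf g' (insert j S) = ∑ T ∈ S.powerset, g' (χ (insert j T)) := by
          unfold anf
          rw [Finset.powerset_insert, Finset.sum_union, Finset.sum_image]
          · have hzero : ∑ T ∈ S.powerset, g' (χ T) = 0 := by
              refine Finset.sum_eq_zero fun T hT => ?_
              rw [Finset.mem_powerset] at hT
              refine hvan _ ?_
              have hiT : i ∉ T := fun h => hiS (hT h)
              have hjT : j ∉ T := fun h => hjS (hT h)
              simp [χ, hiT, hjT]
            rw [hzero, zero_add]
          · intro T₁ h₁ T₂ h₂ he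
            rw [Finset.mem_coe, Finset.mem_powerset] at h₁ h₂
            have hj₁ : j ∉ T₁ := fun h => hjS (h₁ h)
            have hj₂ : j ∉ T₂ := fun h => hjS (h₂ h)
            rw [← Finset.erase_insert hj₁, ← Finset.erase_insert hj₂, he]
          · rw [Finset.disjoint_left]
            intro T hT hT2
            rw [Finset.mem_powerset] at hT
            obtain ⟨T', hT', rfl⟩ := Finset.mem_image.1 hT2
            exact hjS (hT (Finset.mem_insert_self j T'))
        rw [h1, ← h2]
        refine anf_eq_zero_of_funcDeg_lt ?_
        rw [Finset.card_insert_of_notMem hjS]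
        omega

/-- Existence of a permutation fixing `[0, 2b)` and sending `2b ↦ a`, `2b+1 ↦ c`. -/
lemma exists_perm {b : ℕ} (h2b : 2 * b + 1 < n) {a c : Fin n} (hac : a ≠ c)
    (ha : 2 * b ≤ a.val) (hc : 2 * b ≤ c.val) :
    ∃ ρ : Equiv.Perm (Fin n),
      ρ ⟨2 * b, by omega⟩ = a ∧ ρ ⟨2 * b + 1, h2b⟩ = c ∧
      ∀ k : Fin n, k.val < 2 * b → ρ k = k := by
  set i0 : Fin n := ⟨2 * b, by omega⟩
  set i1 : Fin n := ⟨2 * b + 1, h2b⟩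
  set σ1 : Equiv.Perm (Fin n) := Equiv.swap i0 a
  set j' : Fin n := σ1 c
  have hj'ge : 2 * b ≤ j'.val := by
    have : j' = c ∨ j' = a ∨ j' = i0 := by
      by_cases h1 : c = i0
      · right; left; simp [j', σ1, h1, Equiv.swap_apply_left]
      · by_cases h2 : c = a
        · right; right; simp [j', σ1, h2, Equiv.swap_apply_right]
        · left; simp [j', σ1, Equiv.swap_apply_of_ne_of_ne h1 h2]
    rcases this with h | h | h
    · rw [h]; exact hc
    · rw [h]; exact ha
    · rw [h]
  have hj'ne : j' ≠ i0 := by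
    intro h
    have : c = σ1 i0 := by rw [← h]; simp [j', σ1]
    rw [Equiv.swap_apply_left] at this
    exact hac this.symm
  set σ2 : Equiv.Perm (Fin n) := Equiv.swap i1 j'
  refine ⟨σ1 * σ2, ?_, ?_, ?_⟩
  · have h1 : σ2 i0 = i0 := Equiv.swap_apply_of_ne_of_ne
      (fun h => by simp only [i0, i1, Fin.mk.injEq] at h; omega) (Ne.symm hj'ne)
    simp [Equiv.Perm.mul_apply, h1, σ1, Equiv.swap_apply_left]
  · have h1 : σ2 i1 = j' := Equiv.swap_apply_left _ _
    simp only [Equiv.Perm.mul_apply, h1, j']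
    exact (Equiv.swap_apply_self _ _ _ : σ1 (σ1 c) = c)
  · intro k hk
    have h2 : σ2 k = k := Equiv.swap_apply_of_ne_of_ne
      (fun h => by rw [h] at hk; simp only [i1] at hk; omega)
      (fun h => by rw [h] at hk; omega)
    have h1 : σ1 k = k := Equiv.swap_apply_of_ne_of_ne
      (fun h => by rw [h] at hk; simp only [i0] at hk; omega)
      (fun h => by rw [h] at hk; omega)
    simp [Equiv.Perm.mul_apply, h2, h1]

/-- Invariance under transpositions of coordinates `≥ m` implies invariance under all
permutations fixing coordinates `< m`. -/
lemma symm_of_swaps {m : ℕ} {g : (Fin n → ZMod 2) → ZMod 2}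
    (hg : ∀ a c : Fin n, m ≤ a.val → m ≤ c.val → ∀ x, g (x ∘ Equiv.swap a c) = g x)
    (σ : Equiv.Perm (Fin n)) (hσ : ∀ i : Fin n, i.val < m → σ i = i) :
    ∀ x, g (x ∘ σ) = g x := by
  classical
  set p : Fin n → Prop := fun k => m ≤ k.val with hp
  have h₁ : ∀ k, p k ↔ p (σ k) := by
    intro k
    constructor
    · intro hk
      by_contra hk2
      have : σ (σ k) = σ k := hσ _ (by simpa [p] using hk2)
      have : σ k = k := σ.injective this
      rw [this] at hk2
      exact hk2 hk
    · intro hk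
      by_contra hk2
      have : σ k = k := hσ _ (by simpa [p] using hk2)
      rw [this] at hk
      exact hk2 hk
  have h₂ : ∀ k, σ k ≠ k → p k := by
    intro k hk
    by_contra hk2
    exact hk (hσ _ (by simpa [p] using hk2))
  have hrep : Equiv.Perm.ofSubtype (σ.subtypePerm (fun k => (h₁ k).symm)) = σ :=
    Equiv.Perm.ofSubtype_subtypePerm (fun k => (h₁ k).symm) h₂
  have main : ∀ π : Equiv.Perm (Subtype p), ∀ x,
      g (x ∘ (Equiv.Perm.ofSubtype π : Equiv.Perm (Fin n))) = g x := by
    intro π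
    refine Equiv.Perm.swap_induction_on π ?_ ?_
    · intro x; simp
    · intro π u v huv ih x
      rw [map_mul, Equiv.Perm.ofSubtype_swap_eq]
      have hcomp : x ∘ ((Equiv.swap (u : Fin n) (v : Fin n)) * Equiv.Perm.ofSubtype π : Equiv.Perm (Fin n))
          = (x ∘ Equiv.swap (u : Fin n) (v : Fin n)) ∘ (Equiv.Perm.ofSubtype π : Equiv.Perm (Fin n)) := by
        funext k
        simp [Equiv.Perm.mul_apply, Function.comp]
      rw [hcomp, ih, hg _ _ u.2 v.2]
  intro x
  rw [← hrep]
  exact main _ x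


noncomputable def xext (x : Fin n → ZMod 2) (m : ℕ) : ZMod 2 :=
  if h : m < n then x ⟨m, h⟩ else 0

noncomputable def Pb (b : ℕ) (x : Fin n → ZMod 2) : ZMod 2 :=
  ∏ k ∈ Finset.range b, (xext x (2 * k) + xext x (2 * k + 1))

lemma Pb_comp {b : ℕ} (σ : Equiv.Perm (Fin n))
    (hσ : ∀ k : Fin n, k.val < 2 * b → σ k = k) (x : Fin n → ZMod 2) :
    Pb b (x ∘ σ) = Pb b x := by
  unfold Pb
  refine Finset.prod_congr rfl fun k hk => ?_
  rw [Finset.mem_range] at hk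
  have e : ∀ m, m < 2 * b → xext (x ∘ σ) m = xext x m := by
    intro m hmb
    unfold xext
    by_cases hm : m < n
    · rw [dif_pos hm, dif_pos hm]
      show x (σ ⟨m, hm⟩) = x ⟨m, hm⟩
      rw [hσ ⟨m, hm⟩ hmb]
    · rw [dif_neg hm, dif_neg hm]
  rw [e _ (by omega), e _ (by omega)]

lemma zmod2_add_eq_zero_iff (u v : ZMod 2) : u + v = 0 ↔ u = v := by
  rcases zmod2_cases u with h | h <;> rcases zmod2_cases v with h' | h' <;>
    simp [h, h'] <;> decide

lemma main_induction {n : ℕ} (f : (Fin n → ZMod 2) → ZMod 2) (hf : SymmF f) :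
    ∀ d b : ℕ, ∀ g : (Fin n → ZMod 2) → ZMod 2, g ≠ 0 → funcDeg g ≤ d → 2 * b ≤ n →
    (∀ x y, (∀ i : Fin n, 2 * b ≤ i.val → x i = y i) → g x = g y) →
    (∀ x, f x * Pb b x * g x = 0) →
    ∃ b', b ≤ b' ∧ 2 * b' ≤ n ∧ ∃ h : (Fin n → ZMod 2) → ZMod 2, h ≠ 0 ∧
      (∀ x y, (∀ i : Fin n, 2 * b' ≤ i.val → x i = y i) → h x = h y) ∧
      (∀ σ : Equiv.Perm (Fin n), (∀ i : Fin n, i.val < 2 * b' → σ i = i) →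
        ∀ x, h (x ∘ σ) = h x) ∧
      funcDeg h ≤ d - (b' - b) ∧
      (∀ x, f x * Pb b' x * h x = 0) := by
  intro d
  induction d using Nat.strong_induction_on with
  | _ d ih =>
  intro b g hgne hgdeg hbn hdep hann
  by_cases hsy : ∀ a c : Fin n, 2 * b ≤ a.val → 2 * b ≤ c.val →
      ∀ x, g (x ∘ Equiv.swap a c) = g x
  · exact ⟨b, le_rfl, hbn, g, hgne, hdep,
      fun σ hσ x => symm_of_swaps hsy σ hσ x, by simpa using hgdeg, hann⟩
  · push_neg at hsy
    obtain ⟨a, c, ha, hc, xw, hxw⟩ := hsy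
    have hac : a ≠ c := by
      rintro rfl
      apply hxw
      congr 1
      funext k
      simp
    set τ : Equiv.Perm (Fin n) := Equiv.swap a c with hτ
    have hτfix : ∀ k : Fin n, k.val < 2 * b → τ k = k := by
      intro k hk
      refine Equiv.swap_apply_of_ne_of_ne ?_ ?_
      · intro h; rw [h] at hk; omega
      · intro h; rw [h] at hk; omega
    have hτge : ∀ k : Fin n, 2 * b ≤ k.val → 2 * b ≤ (τ k).val := by
      intro k hk
      rcases eq_or_ne k a with rfl | h1
      · rw [Equiv.swap_apply_left]; exact hc
      · rcases eq_or_ne k c with rfl | h2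
        · rw [Equiv.swap_apply_right]; exact ha
        · rw [Equiv.swap_apply_of_ne_of_ne h1 h2]; exact hk
    set g' : (Fin n → ZMod 2) → ZMod 2 := fun x => g x + g (x ∘ τ) with hg'
    have hg'w : g' xw ≠ 0 := by
      intro h0
      have h0' : g (xw ∘ τ) + g xw = 0 := by
        have h0'' : g xw + g (xw ∘ τ) = 0 := h0
        rw [add_comm] at h0''
        exact h0''
      exact hxw ((zmod2_add_eq_zero_iff _ _).1 h0')
    have hvan : ∀ x, x a = x c → g' x = 0 := by
      intro x hx
      have hxτ : x ∘ τ = x := by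
        funext k
        rcases eq_or_ne k a with rfl | h1
        · show x (τ k) = x k
          rw [Equiv.swap_apply_left, hx]
        · rcases eq_or_ne k c with rfl | h2
          · show x (τ k) = x k
            rw [Equiv.swap_apply_right, hx]
          · show x (τ k) = x k
            rw [Equiv.swap_apply_of_ne_of_ne h1 h2]
      show g x + g (x ∘ τ) = 0
      rw [hxτ]
      exact zmod2_add_self _
    have hττ : ∀ x : Fin n → ZMod 2, (x ∘ τ) ∘ τ = x := by
      intro x
      funext k
      show x (τ (τ k)) = x k
      rw [Equiv.swap_apply_self]
    have hsymτ : ∀ x, g' (x ∘ τ) = g' x := by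
      intro x
      show g (x ∘ τ) + g ((x ∘ τ) ∘ τ) = g x + g (x ∘ τ)
      rw [hττ, add_comm]
    have hanng' : ∀ x, f x * Pb b x * g' x = 0 := by
      intro x
      show f x * Pb b x * (g x + g (x ∘ τ)) = 0
      rw [mul_add, hann x, zero_add]
      have h1 := hann (x ∘ τ)
      rw [hf τ x, Pb_comp τ hτfix x] at h1
      exact h1
    have hdegg' : funcDeg g' ≤ d := by
      refine funcDeg_le fun S hS => ?_
      have h1 : anf g' S = anf g S + anf (fun x => g (x ∘ τ)) S := by
        unfold anf
        rw [← Finset.sum_add_distrib]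
      rw [h1, anf_eq_zero_of_funcDeg_lt (lt_of_le_of_lt hgdeg hS),
        anf_eq_zero_of_funcDeg_lt
          (lt_of_le_of_lt ((funcDeg_comp_perm_le g τ).trans hgdeg) hS), add_zero]
    have hd1 : 1 ≤ d := by
      by_contra hd0
      have hd0' : funcDeg g' ≤ 0 := le_trans hdegg' (by omega)
      have hz : g' (fun _ => 0) = 0 := hvan _ rfl
      exact hg'w (by rw [funcDeg_const g' hd0' xw (fun _ => 0), hz])
    obtain ⟨g1, hfac, hindep1, hdeg1⟩ := decomp hac hvan hsymτ
    have hg1w : g1 xw ≠ 0 := by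
      intro h0
      apply hg'w
      rw [hfac xw, h0, mul_zero]
    have g1eq : ∀ x, g1 x = g' (Function.update (Function.update x a 0) c 1) := by
      intro x
      set x'' := Function.update (Function.update x a 0) c 1 with hx''
      have h1 : g1 x = g1 x'' := by
        refine hindep1 _ _ fun k hk1 hk2 => ?_
        rw [hx'', Function.update_of_ne hk2, Function.update_of_ne hk1]
      have ha'' : x'' a = 0 := by
        rw [hx'', Function.update_of_ne hac, Function.update_self]
      have hc'' : x'' c = 1 := by
        rw [hx'', Function.update_self]
      rw [h1, hfac x'', ha'', hc'', zero_add, one_mul]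
    have hdepg' : ∀ x y, (∀ i : Fin n, 2 * b ≤ i.val → x i = y i) → g' x = g' y := by
      intro x y hxy
      show g x + g (x ∘ τ) = g y + g (y ∘ τ)
      rw [hdep x y hxy, hdep (x ∘ τ) (y ∘ τ)
        (fun i hi => hxy (τ i) (hτge i hi))]
    have hdep1 : ∀ x y, (∀ i : Fin n, 2 * b ≤ i.val → i ≠ a → i ≠ c → x i = y i) →
        g1 x = g1 y := by
      intro x y hxy
      rw [g1eq x, g1eq y]
      refine hdepg' _ _ fun i hi => ?_
      rcases eq_or_ne i c with rfl | h2
      · rw [Function.update_self, Function.update_self]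
      · rw [Function.update_of_ne h2, Function.update_of_ne h2]
        rcases eq_or_ne i a with rfl | h1
        · rw [Function.update_self, Function.update_self]
        · rw [Function.update_of_ne h1, Function.update_of_ne h1]
          exact hxy i hi h1 h2
    have hacv : a.val ≠ c.val := fun h => hac (Fin.ext h)
    have h2b1 : 2 * b + 1 < n := by
      have := a.isLt; have := c.isLt; omega
    obtain ⟨ρ, hρ0, hρ1, hρfix⟩ := exists_perm h2b1 hac ha hc
    have hρs0 : ρ.symm a = ⟨2 * b, by omega⟩ := by
      rw [← hρ0, Equiv.symm_apply_apply]
    have hρs1 : ρ.symm c = ⟨2 * b + 1, h2b1⟩ := by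
      rw [← hρ1, Equiv.symm_apply_apply]
    have hρsfix : ∀ k : Fin n, k.val < 2 * b → ρ.symm k = k := by
      intro k hk
      have h1 := congrArg ρ.symm (hρfix k hk)
      rw [Equiv.symm_apply_apply] at h1
      exact h1.symm
    have hρsge : ∀ k : Fin n, 2 * b ≤ k.val → k ≠ a → k ≠ c →
        2 * b + 2 ≤ (ρ.symm k).val := by
      intro k hk h1 h2
      have e0 : ρ.symm k ≠ ⟨2 * b, by omega⟩ := by
        intro h
        apply h1
        rw [← hρ0, ← h, Equiv.apply_symm_apply]
      have e1 : ρ.symm k ≠ ⟨2 * b + 1, h2b1⟩ := by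
        intro h
        apply h2
        rw [← hρ1, ← h, Equiv.apply_symm_apply]
      have e2 : ¬ (ρ.symm k).val < 2 * b := by
        intro hlt
        have h3 := hρfix (ρ.symm k) hlt
        rw [Equiv.apply_symm_apply] at h3
        rw [h3] at hk
        omega
      have e0' : (ρ.symm k).val ≠ 2 * b := fun h => e0 (Fin.ext h)
      have e1' : (ρ.symm k).val ≠ 2 * b + 1 := fun h => e1 (Fin.ext h)
      omega
    set g2 : (Fin n → ZMod 2) → ZMod 2 := fun y => g1 (y ∘ ρ.symm) with hg2
    have hg2w : g2 (xw ∘ ρ) ≠ 0 := by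
      have h1 : (xw ∘ ρ) ∘ ρ.symm = xw := by
        funext k
        show xw (ρ (ρ.symm k)) = xw k
        rw [Equiv.apply_symm_apply]
      show g1 ((xw ∘ ρ) ∘ ρ.symm) ≠ 0
      rw [h1]
      exact hg1w
    have hg2ne : g2 ≠ 0 := by
      intro h0
      exact hg2w (by rw [h0]; rfl)
    have hdep2 : ∀ x y, (∀ i : Fin n, 2 * (b + 1) ≤ i.val → x i = y i) →
        g2 x = g2 y := by
      intro x y hxy
      refine hdep1 _ _ fun i hi h1 h2 => ?_
      show x (ρ.symm i) = y (ρ.symm i)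
      exact hxy _ (by have := hρsge i hi h1 h2; omega)
    have hdeg2 : funcDeg g2 ≤ d - 1 := by
      calc funcDeg g2 ≤ funcDeg g1 := funcDeg_comp_perm_le g1 ρ.symm
        _ ≤ funcDeg g' - 1 := hdeg1
        _ ≤ d - 1 := Nat.sub_le_sub_right hdegg' 1
    have hann2 : ∀ y, f y * Pb (b + 1) y * g2 y = 0 := by
      intro y
      have base := hanng' (y ∘ ρ.symm)
      rw [hfac (y ∘ ρ.symm), hf ρ.symm y, Pb_comp ρ.symm hρsfix y] at base
      have hya : (y ∘ ρ.symm) a = xext y (2 * b) := by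
        show y (ρ.symm a) = xext y (2 * b)
        rw [hρs0]
        unfold xext
        rw [dif_pos (by omega : 2 * b < n)]
      have hyc : (y ∘ ρ.symm) c = xext y (2 * b + 1) := by
        show y (ρ.symm c) = xext y (2 * b + 1)
        rw [hρs1]
        unfold xext
        rw [dif_pos h2b1]
      rw [hya, hyc] at base
      have hPb : Pb (b + 1) y = Pb b y * (xext y (2 * b) + xext y (2 * b + 1)) := by
        unfold Pb
        rw [Finset.prod_range_succ]
      rw [hPb]
      calc f y * (Pb b y * (xext y (2 * b) + xext y (2 * b + 1))) * g2 y
          = f y * Pb b y * ((xext y (2 * b) + xext y (2 * b + 1)) * g1 (y ∘ ρ.symm)) := by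
            rw [hg2]; ring
        _ = 0 := base
    obtain ⟨b', hb'ge, hb'n, h, hhne, hhdep, hhsym, hhdeg, hhann⟩ :=
      ih (d - 1) (by omega) (b + 1) g2 hg2ne hdeg2 (by omega) hdep2 hann2
    exact ⟨b', by omega, hb'n, h, hhne, hhdep, hhsym, le_trans hhdeg (by omega), hhann⟩

end Stmt7Aux

theorem stmt7 {n : ℕ} (hn : 2 ≤ n)
    (f g : (Fin n → ZMod 2) → ZMod 2) (hf : SymmF f)
    (hg : g ≠ 0) (hfg : f * g = 0) :
    ∃ b, ∃ hb : b ≤ n / 2, ∃ h : (Fin n → ZMod 2) → ZMod 2,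
      h ≠ 0 ∧
      (∀ x y : Fin n → ZMod 2, (∀ i : Fin n, 2 * b ≤ i.val → x i = y i) → h x = h y) ∧
      (∀ σ : Equiv.Perm (Fin n), (∀ i : Fin n, i.val < 2 * b → σ i = i) →
        ∀ x, h (x ∘ σ) = h x) ∧
      funcDeg h ≤ funcDeg g - b ∧
      f * h * (fun x => ∏ i : Fin b,
        (x ⟨2 * i.val, by have := i.isLt; omega⟩ +
         x ⟨2 * i.val + 1, by have := i.isLt; omega⟩)) = 0 := by
  have ann0 : ∀ x, f x * Stmt7Aux.Pb 0 x * g x = 0 := by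
    intro x
    have h1 : Stmt7Aux.Pb (n := n) 0 x = 1 := by
      unfold Stmt7Aux.Pb
      simp
    rw [h1, mul_one]
    have h2 := congrFun hfg x
    exact h2
  have dep0 : ∀ x y : Fin n → ZMod 2,
      (∀ i : Fin n, 2 * 0 ≤ i.val → x i = y i) → g x = g y := by
    intro x y hxy
    exact congrArg g (funext fun i => hxy i (by omega))
  obtain ⟨b', _, hb'n, h, hhne, hhdep, hhsym, hhdeg, hhann⟩ :=
    Stmt7Aux.main_induction f hf (funcDeg g) 0 g hg le_rfl (by omega) dep0 ann0
  refine ⟨b', by omega, h, hhne, hhdep, hhsym, by simpa using hhdeg, ?_⟩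
  funext x
  simp only [Pi.mul_apply, Pi.zero_apply]
  have hP : (∏ i : Fin b',
      (x ⟨2 * i.val, by have := i.isLt; omega⟩ +
       x ⟨2 * i.val + 1, by have := i.isLt; omega⟩)) = Stmt7Aux.Pb b' x := by
    unfold Stmt7Aux.Pb
    rw [← Fin.prod_univ_eq_prod_range (fun k => Stmt7Aux.xext x (2 * k) + Stmt7Aux.xext x (2 * k + 1)) b']
    refine Finset.prod_congr rfl fun i _ => ?_
    have h1 : 2 * i.val < n := by have := i.isLt; omega
    have h2 : 2 * i.val + 1 < n := by have := i.isLt; omega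
    unfold Stmt7Aux.xext
    rw [dif_pos h1, dif_pos h2]
  rw [hP]
  have := hhann x
  calc f x * h x * Stmt7Aux.Pb b' x = f x * Stmt7Aux.Pb b' x * h x := by ring
    _ = 0 := hhann x
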